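/- Let A_{i,j} (i,j ∈ {1,…,f}, i≠j) be a linked system of symmetric group divisible designs with parameters (v,k,m,n,λ₁,λ₂) and linking parameters σ, τ. Then the complements A'_{i,j} := J_v − A_{i,j} form a linked system of symmetric group divisible designs with parameters (v, v−k, m, n, v−2k+λ₁, v−2k+λ₂) and linking parameters σ' = v−2k+τ, τ' = v−2k+σ; in particular A'_{i,j}A'_{j,l} = (v−2k+τ)A'_{i,l} + (v−2k+σ)(J_v − A'_{i,l}) for distinct i,j,l. -/

import Mathlib

open Matrix

noncomputable section

/-- The all-ones matrix `J_v` (with `v = m·n`, indexed by `Fin m × Fin n`). -/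
def Jmat (m n : ℕ) : Matrix (Fin m × Fin n) (Fin m × Fin n) ℝ :=
  Matrix.of fun _ _ => 1

/-- The block-diagonal matrix `I_m ⊗ J_n` (indexed by `Fin m × Fin n`). -/
def Kmat (m n : ℕ) : Matrix (Fin m × Fin n) (Fin m × Fin n) ℝ :=
  Matrix.of fun p q => if p.1 = q.1 then 1 else 0

/-- The complements `A'_{i,j} = J_v − A_{i,j}` of a linked system of symmetric
group divisible designs with parameters `(v,k,m,n,λ₁,λ₂)` and linking
parameters `σ, τ` form a linked system of symmetric group divisible designs with
parameters `(v, v−k, m, n, v−2k+λ₁, v−2k+λ₂)` and linking parameters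
`σ' = v−2k+τ`, `τ' = v−2k+σ`. -/
theorem stmt13 (f m n : ℕ) (hm : 2 ≤ m) (hn : 2 ≤ n)
    (k l1 l2 σ τ : ℝ) (hk0 : 0 < k) (hkv : k < (m : ℝ) * n)
    (A : Fin f → Fin f → Matrix (Fin m × Fin n) (Fin m × Fin n) ℝ)
    (h01 : ∀ i j, i ≠ j → ∀ p q, A i j p q = 0 ∨ A i j p q = 1)
    (htr : ∀ i j, i ≠ j → (A i j)ᵀ = A j i)
    (hL1 : ∀ i j, i ≠ j → A i j * (A i j)ᵀ =
      k • (1 : Matrix (Fin m × Fin n) (Fin m × Fin n) ℝ)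
        + l1 • (Kmat m n - 1) + l2 • (Jmat m n - Kmat m n))
    (hL2 : ∀ i j l, i ≠ j → j ≠ l → i ≠ l →
      A i j * A j l = σ • A i l + τ • (Jmat m n - A i l)) :
    (∀ i j, i ≠ j → ∀ p q,
      (Jmat m n - A i j) p q = 0 ∨ (Jmat m n - A i j) p q = 1) ∧
    (∀ i j, i ≠ j → (Jmat m n - A i j)ᵀ = Jmat m n - A j i) ∧
    (∀ i j, i ≠ j → (Jmat m n - A i j) * (Jmat m n - A i j)ᵀ =
      ((m : ℝ) * n - k) • (1 : Matrix (Fin m × Fin n) (Fin m × Fin n) ℝ)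
        + ((m : ℝ) * n - 2 * k + l1) • (Kmat m n - 1)
        + ((m : ℝ) * n - 2 * k + l2) • (Jmat m n - Kmat m n)) ∧
    (∀ i j l, i ≠ j → j ≠ l → i ≠ l →
      (Jmat m n - A i j) * (Jmat m n - A j l) =
        ((m : ℝ) * n - 2 * k + τ) • (Jmat m n - A i l)
          + ((m : ℝ) * n - 2 * k + σ) • (Jmat m n - (Jmat m n - A i l))) := by

  have hJt : (Jmat m n)ᵀ = Jmat m n := by ext p q; simp [Jmat, transpose_apply]
  have hrow : ∀ i j, i ≠ j → ∀ p, (∑ q, A i j p q) = k := by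
    intro i j hij p
    have h := congrFun (congrFun (hL1 i j hij) p) p
    simp only [mul_apply, transpose_apply, Matrix.add_apply, Matrix.smul_apply, Matrix.sub_apply,
      one_apply_eq, Kmat, Jmat, Matrix.of_apply, if_pos rfl, smul_eq_mul] at h
    have : (∑ q, A i j p q * A i j p q) = ∑ q, A i j p q := by
      refine Finset.sum_congr rfl fun q _ => ?_
      rcases h01 i j hij p q with h | h <;> simp [h]
    rw [this] at h
    simp at h; linarith
  have hAJ : ∀ i j, i ≠ j → A i j * Jmat m n = k • Jmat m n := by
    intro i j hij
    ext p q
    simp [mul_apply, Jmat, hrow i j hij p]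
  have hJA : ∀ i j, i ≠ j → Jmat m n * A i j = k • Jmat m n := by
    intro i j hij
    ext p q
    have : (∑ r, A i j r q) = k := by
      have := hrow j i (Ne.symm hij) q
      calc (∑ r, A i j r q) = ∑ r, A j i q r := by
            refine Finset.sum_congr rfl fun r _ => ?_
            rw [← htr i j hij]; rfl
        _ = k := this
    simp [mul_apply, Jmat, this]
  have hJJ : Jmat m n * Jmat m n = ((m : ℝ) * n) • Jmat m n := by
    ext p q
    simp [mul_apply, Jmat, Finset.card_univ, mul_comm]
  refine ⟨?_, ?_, ?_, ?_⟩
  · intro i j hij p q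
    rcases h01 i j hij p q with h0 | h1
    · right; simp [Jmat, Matrix.sub_apply, h0]
    · left; simp [Jmat, Matrix.sub_apply, h1]
  · intro i j hij
    rw [Matrix.transpose_sub, hJt, htr i j hij]
  · intro i j hij
    rw [Matrix.transpose_sub, hJt, htr i j hij,
      Matrix.sub_mul, Matrix.mul_sub, Matrix.mul_sub,
      hJJ, hJA j i (Ne.symm hij), hAJ i j hij]
    have h1 : A i j * A j i = k • (1 : Matrix (Fin m × Fin n) (Fin m × Fin n) ℝ)
        + l1 • (Kmat m n - 1) + l2 • (Jmat m n - Kmat m n) := by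
      rw [← htr i j hij]; exact hL1 i j hij
    rw [h1]
    module
  · intro i j l hij hjl hil
    rw [Matrix.sub_mul, Matrix.mul_sub, Matrix.mul_sub,
      hJJ, hJA j l hjl, hAJ i j hij, hL2 i j l hij hjl hil]
    module


end
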